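/- Let p be a prime, let H be a positive integer, let 𝓜 ⊆ 𝔽_p^* be a set of cardinality M, and let L be any integer. Let J(L, 𝓗, 𝓜) denote the number of quadruples (h_1, h_2, m_1, m_2) with h_1, h_2 ∈ {1, …, H} and m_1, m_2 ∈ 𝓜 satisfying (L + h_1)·m_1 ≡ (L + h_2)·m_2 (mod p), and let J(𝓗, 𝓜) = J(0, 𝓗, 𝓜). Then J(L, 𝓗, 𝓜) ≤ 2·J(𝓗, 𝓜) + M^2. -/

import Mathlib

open Finset

lemma card_filter_prod {α β : Type*} 
    (A : Finset α) (B : Finset β) (P : α × β → Prop) [DecidablePred P] :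
    ((A ×ˢ B).filter P).card = ∑ b ∈ B, (A.filter (fun a => P (a, b))).card := by
  rw [Finset.card_filter, Finset.sum_product, Finset.sum_comm]
  exact Finset.sum_congr rfl fun b _ => (Finset.card_filter _ _).symm

lemma exists_rep (p : ℕ) (hp : 0 < p) (a : ZMod p) :
    ∃ r : ℤ, 1 ≤ r ∧ r ≤ p ∧ ((r : ZMod p) = a) := by
  haveI : NeZero p := ⟨hp.ne'⟩
  by_cases h : a = 0
  · exact ⟨p, by exact_mod_cast hp, le_refl _, by simp [h]⟩
  · refine ⟨a.val, ?_, ?_, ?_⟩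
    · have : a.val ≠ 0 := by simpa [ZMod.val_eq_zero] using h
      omega
    · exact_mod_cast (a.val_lt).le
    · have : ((a.val : ℤ) : ZMod p) = ((a.val : ℕ) : ZMod p) := by push_cast; ring
      rw [this, ZMod.natCast_val, ZMod.cast_id]

lemma count_res_upper (p : ℕ) (hp : 0 < p) (H : ℕ) (a : ZMod p) :
    ((((Finset.Icc (1:ℤ) H)).filter (fun h : ℤ => ((h : ZMod p) = a))).card : ℤ) ≤ (H:ℤ)/p + 1 := by
  obtain ⟨r, hr1, hrp, hra⟩ := exists_rep p hp a
  have hp' : (0:ℤ) < p := by exact_mod_cast hp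
  have hmem : ∀ h ∈ (Finset.Icc (1:ℤ) H).filter (fun h : ℤ => ((h : ZMod p) = a)),
      (p:ℤ) ∣ (h - r) ∧ (h - r)/p ∈ Finset.Icc (0:ℤ) ((H:ℤ)/p) := by
    intro h hh
    simp only [Finset.mem_filter, Finset.mem_Icc] at hh
    obtain ⟨⟨hh1, hh2⟩, hha⟩ := hh
    have hdvd : (p:ℤ) ∣ (h - r) := by
      have : ((h - r : ℤ) : ZMod p) = 0 := by push_cast [hha, hra]; ring
      exact (ZMod.intCast_zmod_eq_zero_iff_dvd _ _).mp this
    refine ⟨hdvd, ?_⟩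
    have hnn : 0 ≤ h - r := by
      by_contra hneg
      push_neg at hneg
      obtain ⟨k, hk⟩ := hdvd
      have : k < 0 := by nlinarith
      nlinarith
    simp only [Finset.mem_Icc]
    constructor
    · positivity
    · exact Int.ediv_le_ediv hp' (by omega)
  calc ((((Finset.Icc (1:ℤ) H)).filter (fun h : ℤ => ((h : ZMod p) = a))).card : ℤ)
      ≤ ((Finset.Icc (0:ℤ) ((H:ℤ)/p)).card : ℤ) := by
        exact_mod_cast Finset.card_le_card_of_injOn (fun h => (h - r)/p)
          (fun h hh => (hmem h hh).2)
          (by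
            intro h1 h1m h2 h2m heq
            have d1 := (hmem h1 h1m).1
            have d2 := (hmem h2 h2m).1
            have e1 := Int.ediv_mul_cancel d1
            have e2 := Int.ediv_mul_cancel d2
            simp only at heq
            have : h1 - r = h2 - r := by rw [← e1, ← e2, heq]
            omega)
    _ = (H:ℤ)/p + 1 := by
        rw [Int.card_Icc]
        have : 0 ≤ (H:ℤ)/p := Int.ediv_nonneg (by positivity) hp'.le
        omega

lemma count_res_lower (p : ℕ) (hp : 0 < p) (H : ℕ) (a : ZMod p) :
    (H:ℤ)/p ≤ ((((Finset.Icc (1:ℤ) H)).filter (fun h : ℤ => ((h : ZMod p) = a))).card : ℤ) := by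
  obtain ⟨r, hr1, hrp, hra⟩ := exists_rep p hp a
  have hp' : (0:ℤ) < p := by exact_mod_cast hp
  have hq : 0 ≤ (H:ℤ)/p := Int.ediv_nonneg (by positivity) hp'.le
  calc (H:ℤ)/p = ((Finset.Icc (0:ℤ) ((H:ℤ)/p - 1)).card : ℤ) := by
        rw [Int.card_Icc]; omega
    _ ≤ _ := by
        apply Int.ofNat_le.mpr
        apply Finset.card_le_card_of_injOn (fun j => r + j * p)
        · intro j hj
          simp only [Finset.mem_coe, Finset.mem_Icc] at hj
          simp only [Finset.mem_coe, Finset.mem_filter, Finset.mem_Icc]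
          have hjp : r + j * p ≤ H := by
            have h1 : j * p ≤ ((H:ℤ)/p - 1) * p := by nlinarith [hj.2]
            have h2 : ((H:ℤ)/p) * p ≤ H := Int.ediv_mul_le _ hp'.ne'
            nlinarith
          refine ⟨⟨by nlinarith [hj.1], hjp⟩, ?_⟩
          push_cast
          simp [hra, ZMod.natCast_self]
        · intro j1 _ j2 _ heq
          simp only at heq
          have : j1 * p = j2 * p := by omega
          exact mul_right_cancel₀ hp'.ne' this
lemma bigH (p : ℕ) (hp : p.Prime) (H : ℕ) (hpH : p ≤ H) (m1 m2 : ZMod p) (hm1 : m1 ≠ 0) (c : ZMod p) :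
    (((Finset.Icc (1:ℤ) H ×ˢ Finset.Icc (1:ℤ) H)).filter
      (fun h : ℤ × ℤ => ((h.1 : ZMod p)) * m1 - ((h.2 : ZMod p)) * m2 = c)).card
    ≤ 2 * (((Finset.Icc (1:ℤ) H ×ˢ Finset.Icc (1:ℤ) H)).filter
      (fun h : ℤ × ℤ => ((h.1 : ZMod p)) * m1 - ((h.2 : ZMod p)) * m2 = 0)).card := by
  haveI := Fact.mk hp
  have hp0 : 0 < p := hp.pos
  have hp' : (0:ℤ) < p := by exact_mod_cast hp0
  set q : ℤ := (H:ℤ)/p with hq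
  have hq1 : 1 ≤ q := by
    rw [hq, Int.le_ediv_iff_mul_le hp']
    simpa using (by exact_mod_cast hpH : (p:ℤ) ≤ H)
  have key : ∀ c' : ZMod p, ∀ h2 : ℤ,
      (Finset.Icc (1:ℤ) H).filter (fun h1 : ℤ => ((h1 : ZMod p)) * m1 - ((h2 : ZMod p)) * m2 = c')
      = (Finset.Icc (1:ℤ) H).filter (fun h1 : ℤ => ((h1 : ZMod p)) = (c' + (h2 : ZMod p) * m2) * m1⁻¹) := by
    intro c' h2
    apply Finset.filter_congr
    intro h1 _
    constructor
    · intro hh; field_simp; linear_combination hh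
    · intro hh; field_simp at hh; linear_combination hh
  rw [card_filter_prod, card_filter_prod]
  have upper : (∑ h2 ∈ Finset.Icc (1:ℤ) H,
      ((Finset.Icc (1:ℤ) H).filter (fun h1 : ℤ => ((h1 : ZMod p)) * m1 - ((h2 : ZMod p)) * m2 = c)).card : ℤ)
      ≤ (H:ℤ) * (q+1) := by
    push_cast
    calc (∑ h2 ∈ Finset.Icc (1:ℤ) H, (((Finset.Icc (1:ℤ) H).filter (fun h1 : ℤ => ((h1 : ZMod p)) * m1 - ((h2 : ZMod p)) * m2 = c)).card : ℤ))
        ≤ ∑ h2 ∈ Finset.Icc (1:ℤ) H, (q+1) := by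
          apply Finset.sum_le_sum
          intro h2 _
          rw [key c h2]
          exact count_res_upper p hp0 H _
      _ = (H:ℤ) * (q+1) := by
          rw [Finset.sum_const, Int.card_Icc]
          simp
  have lower : (H:ℤ) * q ≤ (∑ h2 ∈ Finset.Icc (1:ℤ) H,
      ((Finset.Icc (1:ℤ) H).filter (fun h1 : ℤ => ((h1 : ZMod p)) * m1 - ((h2 : ZMod p)) * m2 = 0)).card : ℤ) := by
    push_cast
    calc (H:ℤ) * q = ∑ h2 ∈ Finset.Icc (1:ℤ) H, q := by
          rw [Finset.sum_const, Int.card_Icc]; simp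
      _ ≤ _ := by
          apply Finset.sum_le_sum
          intro h2 _
          rw [key 0 h2]
          exact count_res_lower p hp0 H _
  have hH0 : (0:ℤ) ≤ H := by positivity
  have : ((∑ h2 ∈ Finset.Icc (1:ℤ) H,
      ((Finset.Icc (1:ℤ) H).filter (fun h1 : ℤ => ((h1 : ZMod p)) * m1 - ((h2 : ZMod p)) * m2 = c)).card : ℕ) : ℤ)
      ≤ 2 * (∑ h2 ∈ Finset.Icc (1:ℤ) H,
      ((Finset.Icc (1:ℤ) H).filter (fun h1 : ℤ => ((h1 : ZMod p)) * m1 - ((h2 : ZMod p)) * m2 = 0)).card : ℕ) := by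
    push_cast
    push_cast at upper lower
    nlinarith
  exact_mod_cast this

lemma smallH (p : ℕ) (hp : p.Prime) (H : ℕ) (hH : 0 < H) (hHp : (H:ℤ) ≤ p)
    (m1 m2 : ZMod p) (hm1 : m1 ≠ 0) (hm2 : m2 ≠ 0) (c : ZMod p) :
    (((Finset.Icc (1:ℤ) H ×ˢ Finset.Icc (1:ℤ) H)).filter
      (fun h : ℤ × ℤ => ((h.1 : ZMod p)) * m1 - ((h.2 : ZMod p)) * m2 = c)).card
    ≤ (((Finset.Icc (1:ℤ) H ×ˢ Finset.Icc (1:ℤ) H)).filter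
      (fun h : ℤ × ℤ => ((h.1 : ZMod p)) * m1 - ((h.2 : ZMod p)) * m2 = 0)).card
    + (((Finset.Icc (1:ℤ) H ×ˢ Finset.Icc (1:ℤ) H)).filter
      (fun h : ℤ × ℤ => ((h.1 : ZMod p)) * m1 + ((h.2 : ZMod p)) * m2 = 0)).card + 1 := by
  haveI := Fact.mk hp
  set I := Finset.Icc (1:ℤ) (H:ℤ) with hI
  set S := ((I ×ˢ I)).filter
      (fun h : ℤ × ℤ => ((h.1 : ZMod p)) * m1 - ((h.2 : ZMod p)) * m2 = c) with hSdef
  rcases S.eq_empty_or_nonempty with hS | hS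
  · simp [hS]
  obtain ⟨b, hbS, hbmin⟩ := S.exists_min_image (fun a : ℤ × ℤ => 2*(H:ℤ)*a.1 + a.2) hS
  have hmemS : ∀ a ∈ S, (1 ≤ a.1 ∧ a.1 ≤ H) ∧ (1 ≤ a.2 ∧ a.2 ≤ H) ∧
      ((a.1 : ZMod p)) * m1 - ((a.2 : ZMod p)) * m2 = c := by
    intro a ha
    simp only [hSdef, hI, Finset.mem_filter, Finset.mem_product, Finset.mem_Icc] at ha
    tauto
  have hbfst : ∀ a ∈ S, b.1 ≤ a.1 := by
    intro a ha
    have h1 := hbmin a ha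
    obtain ⟨⟨_, _⟩, ⟨_, _⟩, _⟩ := hmemS a ha
    obtain ⟨⟨_, _⟩, ⟨_, _⟩, _⟩ := hmemS b hbS
    nlinarith
  have hrel : ∀ a ∈ S, ((a.1 - b.1 : ℤ) : ZMod p) * m1 = ((a.2 - b.2 : ℤ) : ZMod p) * m2 := by
    intro a ha
    have h1 := (hmemS a ha).2.2
    have h2 := (hmemS b hbS).2.2
    push_cast
    linear_combination h1 - h2
  have hdvd0 : ∀ d : ℤ, ((d : ZMod p) = 0) → -(p:ℤ) < d → d < p → d = 0 := by
    intro d hd h1 h2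
    have : (p:ℤ) ∣ d := (ZMod.intCast_zmod_eq_zero_iff_dvd _ _).mp hd
    exact Int.eq_zero_of_abs_lt_dvd this (by rw [abs_lt]; exact ⟨h1, h2⟩)
  have hp' : (0:ℤ) < p := by exact_mod_cast hp.pos
  have hno1 : ∀ a ∈ S, a.1 = b.1 → a.2 = b.2 := by
    intro a ha h1
    have hr : ((a.2 - b.2 : ℤ) : ZMod p) * m2 = 0 := by
      rw [← hrel a ha, h1]
      push_cast
      ring
    have : ((a.2 - b.2 : ℤ) : ZMod p) = 0 := (mul_eq_zero.mp hr).resolve_right hm2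
    obtain ⟨⟨_, _⟩, ⟨_, _⟩, _⟩ := hmemS a ha
    obtain ⟨⟨_, _⟩, ⟨_, _⟩, _⟩ := hmemS b hbS
    have := hdvd0 _ this (by omega) (by omega)
    omega
  have hno2 : ∀ a ∈ S, a.2 = b.2 → a.1 = b.1 := by
    intro a ha h2
    have hr : ((a.1 - b.1 : ℤ) : ZMod p) * m1 = 0 := by
      rw [hrel a ha, h2]
      push_cast
      ring
    have : ((a.1 - b.1 : ℤ) : ZMod p) = 0 := (mul_eq_zero.mp hr).resolve_right hm1
    obtain ⟨⟨_, _⟩, ⟨_, _⟩, _⟩ := hmemS a ha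
    obtain ⟨⟨_, _⟩, ⟨_, _⟩, _⟩ := hmemS b hbS
    have := hdvd0 _ this (by omega) (by omega)
    omega
  -- split the erase
  have hsplit := Finset.card_filter_add_card_filter_not
    (s := S.erase b) (p := fun a : ℤ × ℤ => b.2 < a.2)
  have hE1 : ((S.erase b).filter (fun a : ℤ × ℤ => b.2 < a.2)).card ≤
      (((I ×ˢ I)).filter
      (fun h : ℤ × ℤ => ((h.1 : ZMod p)) * m1 - ((h.2 : ZMod p)) * m2 = 0)).card := by
    apply Finset.card_le_card_of_injOn (fun a => (a.1 - b.1, a.2 - b.2))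
    · intro a ha
      simp only [Finset.mem_coe, Finset.mem_filter, Finset.mem_erase] at ha
      obtain ⟨⟨hab, haS⟩, hlt⟩ := ha
      obtain ⟨⟨_, _⟩, ⟨_, _⟩, _⟩ := hmemS a haS
      obtain ⟨⟨_, _⟩, ⟨_, _⟩, _⟩ := hmemS b hbS
      have hd1 : b.1 ≤ a.1 := hbfst a haS
      have hd1' : a.1 ≠ b.1 := by
        intro h
        exact absurd (hno1 a haS h) (by omega)
      simp only [hI, Finset.mem_coe, Finset.mem_filter, Finset.mem_product, Finset.mem_Icc]
      refine ⟨⟨⟨by omega, by omega⟩, by omega, by omega⟩, ?_⟩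
      have := hrel a haS
      linear_combination this
    · intro a1 h1 a2 h2 heq
      simp only [Prod.mk.injEq] at heq
      exact Prod.ext (by omega) (by omega)
  have hE2 : ((S.erase b).filter (fun a : ℤ × ℤ => ¬ b.2 < a.2)).card ≤
      (((I ×ˢ I)).filter
      (fun h : ℤ × ℤ => ((h.1 : ZMod p)) * m1 + ((h.2 : ZMod p)) * m2 = 0)).card := by
    apply Finset.card_le_card_of_injOn (fun a => (a.1 - b.1, b.2 - a.2))
    · intro a ha
      simp only [Finset.mem_coe, Finset.mem_filter, Finset.mem_erase] at ha
      obtain ⟨⟨hab, haS⟩, hlt⟩ := ha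
      obtain ⟨⟨_, _⟩, ⟨_, _⟩, _⟩ := hmemS a haS
      obtain ⟨⟨_, _⟩, ⟨_, _⟩, _⟩ := hmemS b hbS
      have hd1 : b.1 ≤ a.1 := hbfst a haS
      have ha2 : a.2 ≠ b.2 := by
        intro h
        apply hab
        exact Prod.ext (hno2 a haS h) h
      have hd1' : a.1 ≠ b.1 := by
        intro h
        exact absurd (hno1 a haS h) (by omega)
      simp only [hI, Finset.mem_coe, Finset.mem_filter, Finset.mem_product, Finset.mem_Icc]
      refine ⟨⟨⟨by omega, by omega⟩, by omega, by omega⟩, ?_⟩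
      have := hrel a haS
      push_cast
      push_cast at this
      linear_combination this
    · intro a1 h1 a2 h2 heq
      simp only [Prod.mk.injEq] at heq
      exact Prod.ext (by omega) (by omega)
  have hcard : S.card = (S.erase b).card + 1 := by
    rw [Finset.card_erase_of_mem hbS]
    have : 1 ≤ S.card := Finset.card_pos.mpr hS
    omega
  omega

-- reshuffle the quadruple product
lemma reshuffle {p : ℕ} (I : Finset ℤ) (M : Finset (ZMod p)) (R : ZMod p → ZMod p → Prop)
    [∀ x y, Decidable (R x y)] :
    (((I ×ˢ I) ×ˢ (M ×ˢ M)).filter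
      (fun q : (ℤ × ℤ) × (ZMod p × ZMod p) => R ((q.1.1 : ZMod p) * q.2.1) ((q.1.2 : ZMod p) * q.2.2))).card
    = (((I ×ˢ M) ×ˢ (I ×ˢ M)).filter
      (fun z : (ℤ × ZMod p) × (ℤ × ZMod p) => R ((z.1.1 : ZMod p) * z.1.2) ((z.2.1 : ZMod p) * z.2.2))).card := by
  apply Finset.card_bij (fun q _ => ((q.1.1, q.2.1), (q.1.2, q.2.2)))
  · intro q hq
    simp only [Finset.mem_filter, Finset.mem_product] at hq ⊢
    tauto
  · intro q1 h1 q2 h2 heq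
    simp only [Prod.mk.injEq] at heq
    obtain ⟨⟨a1, b1⟩, a2, b2⟩ := heq
    exact Prod.ext (Prod.ext a1 a2) (Prod.ext b1 b2)
  · intro z hz
    refine ⟨((z.1.1, z.2.1), (z.1.2, z.2.2)), ?_, rfl⟩
    simp only [Finset.mem_filter, Finset.mem_product] at hz ⊢
    tauto

lemma conv_eq {p : ℕ} [NeZero p] (A : Finset (ℤ × ZMod p)) (u v : ℤ × ZMod p → ZMod p) :
    ((A ×ˢ A).filter (fun z : (ℤ × ZMod p) × (ℤ × ZMod p) => u z.1 = v z.2)).card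
    = ∑ lam : ZMod p, (A.filter (fun x => u x = lam)).card * (A.filter (fun y => v y = lam)).card := by
  rw [Finset.card_filter, Finset.sum_product]
  calc ∑ x ∈ A, ∑ y ∈ A, (if u x = v y then 1 else 0)
      = ∑ x ∈ A, ∑ lam : ZMod p, (if u x = lam then ((A.filter (fun y => v y = lam)).card) else 0) := by
        apply Finset.sum_congr rfl
        intro x _
        rw [Finset.sum_ite_eq]
        simp only [Finset.mem_univ, if_true]
        rw [Finset.card_filter]
        apply Finset.sum_congr rfl
        intro y _
        exact if_congr eq_comm rfl rfl
    _ = ∑ lam : ZMod p, ∑ x ∈ A, (if u x = lam then ((A.filter (fun y => v y = lam)).card) else 0) :=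
        Finset.sum_comm
    _ = ∑ lam : ZMod p, (A.filter (fun x => u x = lam)).card * (A.filter (fun y => v y = lam)).card := by
        apply Finset.sum_congr rfl
        intro lam _
        rw [← Finset.sum_filter, Finset.sum_const, smul_eq_mul]

lemma cs_neg {p : ℕ} [NeZero p] (N : ZMod p → ℕ) :
    ∑ lam : ZMod p, N lam * N (-lam) ≤ ∑ lam : ZMod p, N lam * N lam := by
  have hneg : ∑ lam : ZMod p, N (-lam) * N (-lam) = ∑ lam : ZMod p, N lam * N lam := by
    apply Finset.sum_nbij' (fun lam => -lam) (fun lam => -lam) <;> simp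
  have h2 : 2 * ∑ lam : ZMod p, N lam * N (-lam) ≤ 2 * ∑ lam : ZMod p, N lam * N lam := by
    calc 2 * ∑ lam : ZMod p, N lam * N (-lam)
        = ∑ lam : ZMod p, 2 * (N lam * N (-lam)) := by rw [Finset.mul_sum]
      _ ≤ ∑ lam : ZMod p, (N lam * N lam + N (-lam) * N (-lam)) := by
          apply Finset.sum_le_sum
          intro lam _
          nlinarith [sq_nonneg (N lam - N (-lam) : ℤ)]
      _ = 2 * ∑ lam : ZMod p, N lam * N lam := by
          rw [Finset.sum_add_distrib, hneg]; ring
  omega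

/-- Lemma 2.4: J(L,𝓗,𝓜) ≤ 2·J(𝓗,𝓜) + M². -/
theorem stmt_7 (p : ℕ) (hp : p.Prime) (H : ℕ) (hH : 0 < H)
    (M : Finset (ZMod p)) (hM : ∀ m ∈ M, m ≠ 0) (L : ℤ) :
    ((((Finset.Icc (1:ℤ) (H:ℤ)) ×ˢ (Finset.Icc (1:ℤ) (H:ℤ))) ×ˢ (M ×ˢ M)).filter
        (fun q => ((L + q.1.1 : ℤ) : ZMod p) * q.2.1
                = ((L + q.1.2 : ℤ) : ZMod p) * q.2.2)).card ≤
      2 * ((((Finset.Icc (1:ℤ) (H:ℤ)) ×ˢ (Finset.Icc (1:ℤ) (H:ℤ))) ×ˢ (M ×ˢ M)).filter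
        (fun q => ((q.1.1 : ℤ) : ZMod p) * q.2.1
                = ((q.1.2 : ℤ) : ZMod p) * q.2.2)).card + M.card ^ 2 := by
  haveI := Fact.mk hp
  haveI : NeZero p := ⟨hp.pos.ne'⟩
  set I := Finset.Icc (1:ℤ) (H:ℤ) with hI
  -- rewrite both filters into the "difference" normal form
  have hL : (((I ×ˢ I) ×ˢ (M ×ˢ M)).filter
        (fun q => ((L + q.1.1 : ℤ) : ZMod p) * q.2.1 = ((L + q.1.2 : ℤ) : ZMod p) * q.2.2))
      = ((I ×ˢ I) ×ˢ (M ×ˢ M)).filter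
        (fun q : (ℤ × ℤ) × (ZMod p × ZMod p) =>
          ((q.1.1 : ZMod p)) * q.2.1 - ((q.1.2 : ZMod p)) * q.2.2 = (L : ZMod p) * (q.2.2 - q.2.1)) := by
    apply Finset.filter_congr
    intro q _
    constructor
    · intro h; push_cast at h; linear_combination h
    · intro h; push_cast; linear_combination h
  have hR : (((I ×ˢ I) ×ˢ (M ×ˢ M)).filter
        (fun q => ((q.1.1 : ℤ) : ZMod p) * q.2.1 = ((q.1.2 : ℤ) : ZMod p) * q.2.2))
      = ((I ×ˢ I) ×ˢ (M ×ˢ M)).filter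
        (fun q : (ℤ × ℤ) × (ZMod p × ZMod p) =>
          ((q.1.1 : ZMod p)) * q.2.1 - ((q.1.2 : ZMod p)) * q.2.2 = 0) := by
    apply Finset.filter_congr
    intro q _
    exact sub_eq_zero.symm
  rw [hL, hR, card_filter_prod, card_filter_prod]
  -- now both sides are sums over mm ∈ M ×ˢ M
  by_cases hsize : (H:ℤ) ≤ (p:ℤ)
  · -- small H regime
    have hB : (∑ mm ∈ M ×ˢ M, ((I ×ˢ I).filter
          (fun hh : ℤ × ℤ => ((hh.1 : ZMod p)) * mm.1 + ((hh.2 : ZMod p)) * mm.2 = 0)).card)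
        ≤ ∑ mm ∈ M ×ˢ M, ((I ×ˢ I).filter
          (fun hh : ℤ × ℤ => ((hh.1 : ZMod p)) * mm.1 - ((hh.2 : ZMod p)) * mm.2 = 0)).card := by
      rw [← card_filter_prod (I ×ˢ I) (M ×ˢ M)
          (fun q : (ℤ × ℤ) × (ZMod p × ZMod p) => ((q.1.1 : ZMod p)) * q.2.1 + ((q.1.2 : ZMod p)) * q.2.2 = 0),
        ← card_filter_prod (I ×ˢ I) (M ×ˢ M)
          (fun q : (ℤ × ℤ) × (ZMod p × ZMod p) => ((q.1.1 : ZMod p)) * q.2.1 - ((q.1.2 : ZMod p)) * q.2.2 = 0),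
        reshuffle I M (fun x y => x + y = 0), reshuffle I M (fun x y => x - y = 0)]
      have e1 : ((I ×ˢ M) ×ˢ (I ×ˢ M)).filter
            (fun z : (ℤ × ZMod p) × (ℤ × ZMod p) => ((z.1.1 : ZMod p)) * z.1.2 + ((z.2.1 : ZMod p)) * z.2.2 = 0)
          = ((I ×ˢ M) ×ˢ (I ×ˢ M)).filter
            (fun z : (ℤ × ZMod p) × (ℤ × ZMod p) =>
              (fun x : ℤ × ZMod p => ((x.1 : ZMod p)) * x.2) z.1 = (fun y : ℤ × ZMod p => -(((y.1 : ZMod p)) * y.2)) z.2) := by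
        apply Finset.filter_congr
        intro z _
        simp only
        exact add_eq_zero_iff_eq_neg
      have e2 : ((I ×ˢ M) ×ˢ (I ×ˢ M)).filter
            (fun z : (ℤ × ZMod p) × (ℤ × ZMod p) => ((z.1.1 : ZMod p)) * z.1.2 - ((z.2.1 : ZMod p)) * z.2.2 = 0)
          = ((I ×ˢ M) ×ˢ (I ×ˢ M)).filter
            (fun z : (ℤ × ZMod p) × (ℤ × ZMod p) =>
              (fun x : ℤ × ZMod p => ((x.1 : ZMod p)) * x.2) z.1 = (fun y : ℤ × ZMod p => ((y.1 : ZMod p)) * y.2) z.2) := by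
        apply Finset.filter_congr
        intro z _
        simp only
        exact sub_eq_zero
      rw [e1, e2, conv_eq (I ×ˢ M) (fun x => ((x.1 : ZMod p)) * x.2) (fun y => -(((y.1 : ZMod p)) * y.2)),
        conv_eq (I ×ˢ M) (fun x => ((x.1 : ZMod p)) * x.2) (fun y => ((y.1 : ZMod p)) * y.2)]
      have e3 : ∀ lam : ZMod p, ((I ×ˢ M).filter (fun y : ℤ × ZMod p => -(((y.1 : ZMod p)) * y.2) = lam)).card
          = ((I ×ˢ M).filter (fun y : ℤ × ZMod p => ((y.1 : ZMod p)) * y.2 = -lam)).card := by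
        intro lam
        congr 1
        apply Finset.filter_congr
        intro y _
        constructor
        · intro h; linear_combination -h
        · intro h; linear_combination -h
      calc ∑ lam : ZMod p, ((I ×ˢ M).filter (fun x : ℤ × ZMod p => ((x.1 : ZMod p)) * x.2 = lam)).card
              * ((I ×ˢ M).filter (fun y : ℤ × ZMod p => -(((y.1 : ZMod p)) * y.2) = lam)).card
          = ∑ lam : ZMod p, ((I ×ˢ M).filter (fun x : ℤ × ZMod p => ((x.1 : ZMod p)) * x.2 = lam)).card
              * ((I ×ˢ M).filter (fun y : ℤ × ZMod p => ((y.1 : ZMod p)) * y.2 = -lam)).card := by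
            apply Finset.sum_congr rfl
            intro lam _
            rw [e3]
        _ ≤ _ := cs_neg (fun lam => ((I ×ˢ M).filter (fun x : ℤ × ZMod p => ((x.1 : ZMod p)) * x.2 = lam)).card)
    calc ∑ mm ∈ M ×ˢ M, ((I ×ˢ I).filter
            (fun hh : ℤ × ℤ => ((hh.1 : ZMod p)) * mm.1 - ((hh.2 : ZMod p)) * mm.2 = (L : ZMod p) * (mm.2 - mm.1))).card
        ≤ ∑ mm ∈ M ×ˢ M, (((I ×ˢ I).filter
            (fun hh : ℤ × ℤ => ((hh.1 : ZMod p)) * mm.1 - ((hh.2 : ZMod p)) * mm.2 = 0)).card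
          + ((I ×ˢ I).filter
            (fun hh : ℤ × ℤ => ((hh.1 : ZMod p)) * mm.1 + ((hh.2 : ZMod p)) * mm.2 = 0)).card + 1) := by
          apply Finset.sum_le_sum
          intro mm hmm
          simp only [Finset.mem_product] at hmm
          exact smallH p hp H hH hsize mm.1 mm.2 (hM _ hmm.1) (hM _ hmm.2) _
      _ = (∑ mm ∈ M ×ˢ M, ((I ×ˢ I).filter
            (fun hh : ℤ × ℤ => ((hh.1 : ZMod p)) * mm.1 - ((hh.2 : ZMod p)) * mm.2 = 0)).card)
          + (∑ mm ∈ M ×ˢ M, ((I ×ˢ I).filter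
            (fun hh : ℤ × ℤ => ((hh.1 : ZMod p)) * mm.1 + ((hh.2 : ZMod p)) * mm.2 = 0)).card)
          + M.card ^ 2 := by
          rw [Finset.sum_add_distrib, Finset.sum_add_distrib, Finset.sum_const, smul_eq_mul,
            mul_one, Finset.card_product, sq]
      _ ≤ 2 * (∑ mm ∈ M ×ˢ M, ((I ×ˢ I).filter
            (fun hh : ℤ × ℤ => ((hh.1 : ZMod p)) * mm.1 - ((hh.2 : ZMod p)) * mm.2 = 0)).card) + M.card ^ 2 := by
          omega
  · -- big H regime
    push_neg at hsize
    have hpH : p ≤ H := by exact_mod_cast hsize.le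
    calc ∑ mm ∈ M ×ˢ M, ((I ×ˢ I).filter
            (fun hh : ℤ × ℤ => ((hh.1 : ZMod p)) * mm.1 - ((hh.2 : ZMod p)) * mm.2 = (L : ZMod p) * (mm.2 - mm.1))).card
        ≤ ∑ mm ∈ M ×ˢ M, 2 * ((I ×ˢ I).filter
            (fun hh : ℤ × ℤ => ((hh.1 : ZMod p)) * mm.1 - ((hh.2 : ZMod p)) * mm.2 = 0)).card := by
          apply Finset.sum_le_sum
          intro mm hmm
          simp only [Finset.mem_product] at hmm
          exact bigH p hp H hpH mm.1 mm.2 (hM _ hmm.1) _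
      _ = 2 * ∑ mm ∈ M ×ˢ M, ((I ×ˢ I).filter
            (fun hh : ℤ × ℤ => ((hh.1 : ZMod p)) * mm.1 - ((hh.2 : ZMod p)) * mm.2 = 0)).card := by
          rw [Finset.mul_sum]
      _ ≤ _ := Nat.le_add_right _ _
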